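/- Let P = p1→p2→⋯→p_ℓ be a forward-induced directed path in an oriented graph D, let γ be an integer with χ⃗(N(v)) ≤ γ for each v ∈ V(P), and let W^p and W^a be defined with respect to P. Then: (1) if D is P⃗4-free, χ⃗(W^p) ≤ 2γ; (2) if D is A⃗4-free, χ⃗(W^a) ≤ 2γ. -/

import Mathlib

namespace DichiP4

variable {V : Type*}

/-- An oriented graph: an arc relation with no digons (hence also no loops). -/
def Oriented (A : V → V → Prop) : Prop := ∀ u v, A u v → ¬ A v u

/-- Adjacency in the underlying (undirected) graph. -/
def Adj (A : V → V → Prop) (u v : V) : Prop := A u v ∨ A v u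

/-- The neighborhood `N(v)` of a vertex in the underlying graph. -/
def nbr (A : V → V → Prop) (v : V) : Set V := {w | Adj A v w}

/-- `N(S)`: the neighborhood of a set of vertices. -/
def nbrSet (A : V → V → Prop) (S : Set V) : Set V := (⋃ v ∈ S, nbr A v) \ S

/-- `N[S]`: the closed neighborhood of a set of vertices. -/
def cnbrSet (A : V → V → Prop) (S : Set V) : Set V := ⋃ v ∈ S, insert v (nbr A v)

/-- A clique in the underlying graph (= the vertex set of a tournament). -/
def IsClique (A : V → V → Prop) (K : Set V) : Prop :=
  ∀ u ∈ K, ∀ v ∈ K, u ≠ v → Adj A u v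

/-- The clique number `ω(D)` of the underlying graph. -/
noncomputable def cliqueNum (A : V → V → Prop) : ℕ :=
  sSup {n | ∃ K : Set V, IsClique A K ∧ K.Finite ∧ K.ncard = n}

/-- The set `s` induces an acyclic subdigraph (no directed cycle within `s`). -/
def AcyclicOn (A : V → V → Prop) (s : Set V) : Prop :=
  ∀ v, ¬ Relation.TransGen (fun x y => x ∈ s ∧ y ∈ s ∧ A x y) v v

/-- The set `s` admits a dicoloring with `k` colors: every color class induces an
acyclic subdigraph. -/
def DicolorableOn (A : V → V → Prop) (s : Set V) (k : ℕ) : Prop :=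
  ∃ c : V → ℕ, (∀ v ∈ s, c v < k) ∧ ∀ i : ℕ, AcyclicOn A {v | v ∈ s ∧ c v = i}

/-- The dichromatic number `χ⃗(s)` of the subdigraph induced by `s`. -/
noncomputable def dichi (A : V → V → Prop) (s : Set V) : ℕ :=
  sInf {k | DicolorableOn A s k}

/-- `A` has an induced subdigraph isomorphic to `B`. -/
def HasInducedCopy {W : Type*} (A : V → V → Prop) (B : W → W → Prop) : Prop :=
  ∃ f : W → V, Function.Injective f ∧ ∀ x y : W, B x y ↔ A (f x) (f y)

/-- `A` is `B`-free: no induced subdigraph of `A` is isomorphic to `B`. -/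
def Free {W : Type*} (A : V → V → Prop) (B : W → W → Prop) : Prop :=
  ¬ HasInducedCopy A B

/-- `P⃗4`: the orientation of the path `0 – 1 – 2 – 3` with arcs `0→1, 1→2, 2→3`. -/
def P4vec : Fin 4 → Fin 4 → Prop := fun x y =>
  (x = 0 ∧ y = 1) ∨ (x = 1 ∧ y = 2) ∨ (x = 2 ∧ y = 3)

/-- `A⃗4`: the orientation of the path `0 – 1 – 2 – 3` with arcs `1→0, 1→2, 3→2`. -/
def A4vec : Fin 4 → Fin 4 → Prop := fun x y =>
  (x = 1 ∧ y = 0) ∨ (x = 1 ∧ y = 2) ∨ (x = 3 ∧ y = 2)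

/-- `Q⃗4`: the orientation of the path `0 – 1 – 2 – 3` with arcs `0→1, 2→1, 3→2`. -/
def Q4vec : Fin 4 → Fin 4 → Prop := fun x y =>
  (x = 0 ∧ y = 1) ∨ (x = 2 ∧ y = 1) ∨ (x = 3 ∧ y = 2)

/-- `Q⃗4'`: the orientation of the path `0 – 1 – 2 – 3` with arcs `1→0, 2→1, 2→3`. -/
def Q4'vec : Fin 4 → Fin 4 → Prop := fun x y =>
  (x = 1 ∧ y = 0) ∨ (x = 2 ∧ y = 1) ∨ (x = 2 ∧ y = 3)

/-- `B` is an orientation of the path on four vertices `0 – 1 – 2 – 3`. -/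
def IsP4Orientation (B : Fin 4 → Fin 4 → Prop) : Prop :=
  Oriented B ∧ ∀ x y : Fin 4, Adj B x y ↔ ((x : ℕ) + 1 = (y : ℕ) ∨ (y : ℕ) + 1 = (x : ℕ))

/-- `p 1 → p 2 → ⋯ → p ℓ` is a directed path in `A` (distinct vertices). -/
def IsDirPath (A : V → V → Prop) (ℓ : ℕ) (p : ℕ → V) : Prop :=
  1 ≤ ℓ ∧ Set.InjOn p (Set.Icc 1 ℓ) ∧ ∀ i, 1 ≤ i → i < ℓ → A (p i) (p (i + 1))

/-- A directed path `p 1 → ⋯ → p ℓ` is forward-induced: no arc `(p i, p j)` with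
`j > i + 1`. -/
def ForwardInduced (A : V → V → Prop) (ℓ : ℕ) (p : ℕ → V) : Prop :=
  ∀ i j, 1 ≤ i → j ≤ ℓ → i + 1 < j → ¬ A (p i) (p j)

/-- `p 1 → ⋯ → p ℓ` is a shortest directed path from `p 1` to `p ℓ`. -/
def IsShortestDirPath (A : V → V → Prop) (ℓ : ℕ) (p : ℕ → V) : Prop :=
  IsDirPath A ℓ p ∧
    ∀ (m : ℕ) (q : ℕ → V), IsDirPath A m q → q 1 = p 1 → q m = p ℓ → ℓ ≤ m

/-- The vertex set `V(P)` of the path `p 1, …, p ℓ`. -/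
def pathSet (ℓ : ℕ) (p : ℕ → V) : Set V := p '' Set.Icc 1 ℓ

/-- `N(P)`: the neighborhood of the vertex set of the path. -/
def pathNbrs (A : V → V → Prop) (ℓ : ℕ) (p : ℕ → V) : Set V := nbrSet A (pathSet ℓ p)

/-- `F i`: vertices of `N(P)` whose first neighbor on the path is `p i`. -/
def Fatt (A : V → V → Prop) (ℓ : ℕ) (p : ℕ → V) (i : ℕ) : Set V :=
  {v ∈ pathNbrs A ℓ p | Adj A v (p i) ∧ ∀ i', 1 ≤ i' → i' < i → ¬ Adj A v (p i')}

/-- `L j`: vertices of `N(P)` whose last neighbor on the path is `p j`. -/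
def Latt (A : V → V → Prop) (ℓ : ℕ) (p : ℕ → V) (j : ℕ) : Set V :=
  {v ∈ pathNbrs A ℓ p | Adj A v (p j) ∧ ∀ j', j < j' → j' ≤ ℓ → ¬ Adj A v (p j')}

/-- `F i ⁺`: in-neighbors of `p i` in `F i`. -/
def FattP (A : V → V → Prop) (ℓ : ℕ) (p : ℕ → V) (i : ℕ) : Set V :=
  {v ∈ Fatt A ℓ p i | A v (p i)}

/-- `F i ⁻`: out-neighbors of `p i` in `F i`. -/
def FattM (A : V → V → Prop) (ℓ : ℕ) (p : ℕ → V) (i : ℕ) : Set V :=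
  {v ∈ Fatt A ℓ p i | A (p i) v}

/-- `L j ⁺`: in-neighbors of `p j` in `L j`. -/
def LattP (A : V → V → Prop) (ℓ : ℕ) (p : ℕ → V) (j : ℕ) : Set V :=
  {v ∈ Latt A ℓ p j | A v (p j)}

/-- `L j ⁻`: out-neighbors of `p j` in `L j`. -/
def LattM (A : V → V → Prop) (ℓ : ℕ) (p : ℕ → V) (j : ℕ) : Set V :=
  {v ∈ Latt A ℓ p j | A (p j) v}

/-- `W^p = (F₂⁻ ∪ ⋯ ∪ F_{ℓ-1}⁻) ∪ (L₂⁺ ∪ ⋯ ∪ L_{ℓ-1}⁺)`. -/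
def Wp (A : V → V → Prop) (ℓ : ℕ) (p : ℕ → V) : Set V :=
  (⋃ i ∈ Set.Icc 2 (ℓ - 1), FattM A ℓ p i) ∪ ⋃ i ∈ Set.Icc 2 (ℓ - 1), LattP A ℓ p i

/-- `W^a = (F₂⁺ ∪ ⋯ ∪ F_{ℓ-1}⁺) ∪ (L₂⁻ ∪ ⋯ ∪ L_{ℓ-1}⁻)`. -/
def Wa (A : V → V → Prop) (ℓ : ℕ) (p : ℕ → V) : Set V :=
  (⋃ i ∈ Set.Icc 2 (ℓ - 1), FattP A ℓ p i) ∪ ⋃ i ∈ Set.Icc 2 (ℓ - 1), LattM A ℓ p i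

/-- `R^p = N(P) \ (N({p1, p2, pℓ}) ∪ W^p)`. -/
def Rp (A : V → V → Prop) (ℓ : ℕ) (p : ℕ → V) : Set V :=
  pathNbrs A ℓ p \ (nbrSet A {p 1, p 2, p ℓ} ∪ Wp A ℓ p)

/-- `R^a = N(P) \ (N({p1, pℓ}) ∪ W^a)`. -/
def Ra (A : V → V → Prop) (ℓ : ℕ) (p : ℕ → V) : Set V :=
  pathNbrs A ℓ p \ (nbrSet A {p 1, p ℓ} ∪ Wa A ℓ p)

/-- A dipolar set: a nonempty set `S` partitioned into `S⁺` (no out-neighbor outside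
`S`) and `S⁻` (no in-neighbor outside `S`). -/
def IsDipolar (A : V → V → Prop) (S : Set V) : Prop :=
  S.Nonempty ∧ ∃ Sp Sm : Set V, Sp ∪ Sm = S ∧ Disjoint Sp Sm ∧
    (∀ v ∈ Sp, ∀ w, w ∉ S → ¬ A v w) ∧ ∀ v ∈ Sm, ∀ w, w ∉ S → ¬ A w v

/-- Reachability by a directed path staying inside `s`. -/
def ReachIn (A : V → V → Prop) (s : Set V) (u v : V) : Prop :=
  Relation.ReflTransGen (fun x y => x ∈ s ∧ y ∈ s ∧ A x y) u v

/-- A digraph is strongly connected. -/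
def StronglyConnected (A : V → V → Prop) : Prop :=
  ∀ u v : V, Relation.ReflTransGen A u v

/-- `t` is a strongly connected component of the subdigraph induced by `s`. -/
def IsSCCOf (A : V → V → Prop) (s t : Set V) : Prop :=
  t ⊆ s ∧ t.Nonempty ∧ (∀ u ∈ t, ∀ v ∈ t, ReachIn A s u v) ∧
    ∀ u ∈ t, ∀ v ∈ s, ReachIn A s u v → ReachIn A s v u → v ∈ t

/-- A source strongly connected component: all arcs between it and the rest of `s`
begin in it. -/
def IsSourceSCC (A : V → V → Prop) (s t : Set V) : Prop :=
  IsSCCOf A s t ∧ ∀ u ∈ s, ∀ v ∈ t, A u v → u ∈ t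

/-- A sink strongly connected component: all arcs between it and the rest of `s`
end in it. -/
def IsSinkSCC (A : V → V → Prop) (s t : Set V) : Prop :=
  IsSCCOf A s t ∧ ∀ u ∈ t, ∀ v ∈ s, A u v → v ∈ t

/-- `K` (a tournament of maximum order) and the directed path `p 1 → ⋯ → p ℓ`
(from a source SCC of `D[K]` to a sink SCC of `D[K]`) form a closed tournament
`C = K ∪ V(P)`. -/
def FormsClosedTournament (A : V → V → Prop) (K : Set V) (ℓ : ℕ) (p : ℕ → V) : Prop :=
  IsClique A K ∧ K.Finite ∧ K.ncard = cliqueNum A ∧ IsDirPath A ℓ p ∧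
    (∃ t, IsSourceSCC A K t ∧ p 1 ∈ t) ∧ ∃ t, IsSinkSCC A K t ∧ p ℓ ∈ t

/-- `K` and `P` form a path-minimizing closed tournament: `|P|` is minimum among
all pairs forming a closed tournament. -/
def FormsPathMinClosedTournament (A : V → V → Prop) (K : Set V) (ℓ : ℕ) (p : ℕ → V) :
    Prop :=
  FormsClosedTournament A K ℓ p ∧
    ∀ (K' : Set V) (ℓ' : ℕ) (p' : ℕ → V), FormsClosedTournament A K' ℓ' p' → ℓ ≤ ℓ'

/-- The strong neighborhood of `S`: neighbors of `S` having both an in-neighbor and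
an out-neighbor in `S`. -/
def strongNbrs (A : V → V → Prop) (S : Set V) : Set V :=
  {v ∈ nbrSet A S | (∃ u ∈ S, A u v) ∧ ∃ u ∈ S, A v u}


section Statement13Aux

variable {A : V → V → Prop}

lemma not_self_aux (hA : Oriented A) (v : V) : ¬ A v v := fun h => hA v v h h

lemma acyclicOn_mono_aux {s t : Set V} (hst : s ⊆ t) (ht : AcyclicOn A t) : AcyclicOn A s := by
  intro v hv
  exact ht v (Relation.TransGen.mono (fun x y h => ⟨hst h.1, hst h.2.1, h.2.2⟩) _ _ hv)

lemma dicolorable_mono_aux {s : Set V} {k k' : ℕ} (h : DicolorableOn A s k) (hkk : k ≤ k') :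
    DicolorableOn A s k' := by
  obtain ⟨c, hc1, hc2⟩ := h
  exact ⟨c, fun v hv => lt_of_lt_of_le (hc1 v hv) hkk, hc2⟩

lemma dicolorable_card_aux [Fintype V] (hA : Oriented A) (s : Set V) :
    DicolorableOn A s (Fintype.card V) := by
  classical
  refine ⟨fun v => (Fintype.equivFin V v : ℕ), fun v _ => (Fintype.equivFin V v).isLt, ?_⟩
  intro i
  have key : ∀ x y : V,
      ¬ (x ∈ {v | v ∈ s ∧ ((Fintype.equivFin V v : ℕ)) = i} ∧
         y ∈ {v | v ∈ s ∧ ((Fintype.equivFin V v : ℕ)) = i} ∧ A x y) := by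
    rintro x y ⟨hx, hy, hxy⟩
    have : x = y := by
      have h1 : (Fintype.equivFin V x : ℕ) = (Fintype.equivFin V y : ℕ) := by
        rw [hx.2, hy.2]
      exact (Fintype.equivFin V).injective (Fin.ext h1)
    exact not_self_aux hA y (this ▸ hxy)
  intro v hv
  cases hv with
  | single h => exact key _ _ h
  | tail _ h => exact key _ _ h

lemma dichi_dicolorable_aux [Fintype V] (hA : Oriented A) (s : Set V) {k : ℕ}
    (h : dichi A s ≤ k) : DicolorableOn A s k := by
  have hne : {k | DicolorableOn A s k}.Nonempty := ⟨_, dicolorable_card_aux hA s⟩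
  exact dicolorable_mono_aux (Nat.sInf_mem hne) h

lemma transGen_mono_le_aux {r : V → V → Prop} {φ : V → ℕ}
    (hstep : ∀ x y, r x y → φ y ≤ φ x) {x y : V} (h : Relation.TransGen r x y) :
    φ y ≤ φ x := by
  induction h with
  | single h => exact hstep _ _ h
  | tail _ h2 ih => exact le_trans (hstep _ _ h2) ih

lemma transGen_cycle_restrict_aux {r : V → V → Prop} {φ : V → ℕ}
    (hstep : ∀ x y, r x y → φ y ≤ φ x) {v : V} (h : Relation.TransGen r v v) :
    Relation.TransGen (fun x y => r x y ∧ φ x = φ v ∧ φ y = φ v) v v := by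
  have key : ∀ x y, Relation.TransGen r x y → φ x = φ v → φ y = φ v →
      Relation.TransGen (fun a b => r a b ∧ φ a = φ v ∧ φ b = φ v) x y := by
    intro x y h
    induction h with
    | single h => exact fun hx hy => .single ⟨h, hx, hy⟩
    | @tail w z h1 h2 ih =>
      intro hx hy
      have hw1 := transGen_mono_le_aux hstep h1
      have hw2 := hstep _ _ h2
      have hw : φ w = φ v := by omega
      exact (ih hx hw).tail ⟨h2, hw, hy⟩
  exact key v v h rfl rfl

lemma block_dicolorable_aux (A : V → V → Prop) (γ a b : ℕ) (T : ℕ → Set V) (q : ℕ → V)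
    (h1 : ∀ i ∈ Set.Icc a b, T i ⊆ nbr A (q i))
    (h2 : ∀ i ∈ Set.Icc a b, ∀ j ∈ Set.Icc a b, i < j → ∀ u ∈ T i, ∀ v ∈ T j, ¬ A u v)
    (h3 : ∀ i ∈ Set.Icc a b, DicolorableOn A (nbr A (q i)) γ) :
    DicolorableOn A (⋃ i ∈ Set.Icc a b, T i) γ := by
  classical
  have hex : ∀ i : ℕ, ∃ c : V → ℕ, i ∈ Set.Icc a b →
      (∀ v ∈ nbr A (q i), c v < γ) ∧
        ∀ m, AcyclicOn A {v | v ∈ nbr A (q i) ∧ c v = m} := by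
    intro i
    by_cases hi : i ∈ Set.Icc a b
    · obtain ⟨c, hc⟩ := h3 i hi
      exact ⟨c, fun _ => hc⟩
    · exact ⟨fun _ => 0, fun h => absurd h hi⟩
  choose col hcol using hex
  set S := ⋃ i ∈ Set.Icc a b, T i with hS
  have hmemS : ∀ v ∈ S, ∃ i, i ∈ Set.Icc a b ∧ v ∈ T i := by
    intro v hv
    rw [hS] at hv
    obtain ⟨i, hi, hvi⟩ := Set.mem_iUnion₂.1 hv
    exact ⟨i, hi, hvi⟩
  let idx : V → ℕ := fun v => if h : ∃ i, i ∈ Set.Icc a b ∧ v ∈ T i then h.choose else 0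
  have hidx : ∀ v ∈ S, idx v ∈ Set.Icc a b ∧ v ∈ T (idx v) := by
    intro v hv
    have h := hmemS v hv
    simp only [idx, dif_pos h]
    exact h.choose_spec
  refine ⟨fun v => col (idx v) v, ?_, ?_⟩
  · intro v hv
    obtain ⟨hi, hvT⟩ := hidx v hv
    exact (hcol _ hi).1 v (h1 _ hi hvT)
  · intro m v hv
    have hvS : v ∈ S ∧ col (idx v) v = m := by
      cases hv with
      | single h => exact h.1
      | tail _ h => exact h.2.1
    have hstep : ∀ x y : V,
        (x ∈ {w | w ∈ S ∧ col (idx w) w = m} ∧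
          y ∈ {w | w ∈ S ∧ col (idx w) w = m} ∧ A x y) → idx y ≤ idx x := by
      rintro x y ⟨hx, hy, hxy⟩
      by_contra hlt
      exact h2 (idx x) (hidx x hx.1).1 (idx y) (hidx y hy.1).1 (by omega) x (hidx x hx.1).2
        y (hidx y hy.1).2 hxy
    have hv' := transGen_cycle_restrict_aux (φ := idx) hstep hv
    have hi := (hidx v hvS.1).1
    refine (hcol (idx v) hi).2 m v (Relation.TransGen.mono ?_ _ _ hv')
    rintro x y ⟨⟨hx, hy, hxy⟩, hix, hiy⟩
    refine ⟨⟨?_, ?_⟩, ⟨?_, ?_⟩, hxy⟩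
    · exact h1 _ hi (hix ▸ (hidx x hx.1).2)
    · rw [← hix]; exact hx.2
    · exact h1 _ hi (hiy ▸ (hidx y hy.1).2)
    · rw [← hiy]; exact hy.2

lemma dicolorable_union_aux {S1 S2 : Set V} {k : ℕ}
    (h1 : DicolorableOn A S1 k) (h2 : DicolorableOn A S2 k) :
    DicolorableOn A (S1 ∪ S2) (2 * k) := by
  classical
  obtain ⟨c1, hb1, ha1⟩ := h1
  obtain ⟨c2, hb2, ha2⟩ := h2
  refine ⟨fun v => if v ∈ S1 then c1 v else k + c2 v, ?_, ?_⟩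
  · intro v hv
    by_cases h : v ∈ S1
    · have := hb1 v h
      simp only [if_pos h]
      omega
    · have := hb2 v (hv.resolve_left h)
      simp only [if_neg h]
      omega
  · intro m
    by_cases hm : m < k
    · refine acyclicOn_mono_aux ?_ (ha1 m)
      rintro v ⟨hv, hc⟩
      have hc' : (if v ∈ S1 then c1 v else k + c2 v) = m := hc
      by_cases h : v ∈ S1
      · rw [if_pos h] at hc'
        exact ⟨h, hc'⟩
      · rw [if_neg h] at hc'
        omega
    · refine acyclicOn_mono_aux ?_ (ha2 (m - k))
      rintro v ⟨hv, hc⟩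
      have hc' : (if v ∈ S1 then c1 v else k + c2 v) = m := hc
      by_cases h : v ∈ S1
      · rw [if_pos h] at hc'
        have := hb1 v h
        omega
      · rw [if_neg h] at hc'
        exact ⟨hv.resolve_left h, by omega⟩

lemma copy_P4_aux (hA : Oriented A) {a b c d : V}
    (hab : a ≠ b) (hac : a ≠ c) (had : a ≠ d) (hbc : b ≠ c) (hbd : b ≠ d) (hcd : c ≠ d)
    (e1 : A a b) (e2 : A b c) (e3 : A c d)
    (n1 : ¬ Adj A a c) (n2 : ¬ Adj A a d) (n3 : ¬ Adj A b d) :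
    HasInducedCopy A P4vec := by
  have r1 : ¬ A b a := hA a b e1
  have r2 : ¬ A c b := hA b c e2
  have r3 : ¬ A d c := hA c d e3
  have n1a : ¬ A a c := fun h => n1 (Or.inl h)
  have n1b : ¬ A c a := fun h => n1 (Or.inr h)
  have n2a : ¬ A a d := fun h => n2 (Or.inl h)
  have n2b : ¬ A d a := fun h => n2 (Or.inr h)
  have n3a : ¬ A b d := fun h => n3 (Or.inl h)
  have n3b : ¬ A d b := fun h => n3 (Or.inr h)
  have la : ¬ A a a := not_self_aux hA a
  have lb : ¬ A b b := not_self_aux hA b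
  have lc : ¬ A c c := not_self_aux hA c
  have ld : ¬ A d d := not_self_aux hA d
  refine ⟨fun x => if x = 0 then a else if x = 1 then b else if x = 2 then c else d, ?_, ?_⟩
  · intro x y h
    fin_cases x <;> fin_cases y <;> simp_all
  · intro x y
    fin_cases x <;> fin_cases y <;> simp [P4vec] <;> assumption

lemma copy_A4_aux (hA : Oriented A) {a b c d : V}
    (hab : a ≠ b) (hac : a ≠ c) (had : a ≠ d) (hbc : b ≠ c) (hbd : b ≠ d) (hcd : c ≠ d)
    (e1 : A b a) (e2 : A b c) (e3 : A d c)
    (n1 : ¬ Adj A a c) (n2 : ¬ Adj A a d) (n3 : ¬ Adj A b d) :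
    HasInducedCopy A A4vec := by
  have r1 : ¬ A a b := hA b a e1
  have r2 : ¬ A c b := hA b c e2
  have r3 : ¬ A c d := hA d c e3
  have n1a : ¬ A a c := fun h => n1 (Or.inl h)
  have n1b : ¬ A c a := fun h => n1 (Or.inr h)
  have n2a : ¬ A a d := fun h => n2 (Or.inl h)
  have n2b : ¬ A d a := fun h => n2 (Or.inr h)
  have n3a : ¬ A b d := fun h => n3 (Or.inl h)
  have n3b : ¬ A d b := fun h => n3 (Or.inr h)
  have la : ¬ A a a := not_self_aux hA a
  have lb : ¬ A b b := not_self_aux hA b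
  have lc : ¬ A c c := not_self_aux hA c
  have ld : ¬ A d d := not_self_aux hA d
  refine ⟨fun x => if x = 0 then a else if x = 1 then b else if x = 2 then c else d, ?_, ?_⟩
  · intro x y h
    fin_cases x <;> fin_cases y <;> simp_all
  · intro x y
    fin_cases x <;> fin_cases y <;> simp [A4vec] <;> assumption

variable {ℓ : ℕ} {p : ℕ → V}

lemma mem_pathSet_aux {i : ℕ} (h1 : 1 ≤ i) (h2 : i ≤ ℓ) : p i ∈ pathSet ℓ p :=
  ⟨i, ⟨h1, h2⟩, rfl⟩

lemma notin_path_aux {v : V} (hv : v ∈ pathNbrs A ℓ p) {i : ℕ} (h1 : 1 ≤ i) (h2 : i ≤ ℓ) :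
    v ≠ p i := fun h => hv.2 (h ▸ mem_pathSet_aux h1 h2)

lemma no_arc_F_P4 (hA : Oriented A) (hp : IsDirPath A ℓ p) (hfree : Free A P4vec)
    {i j : ℕ} (h2i : 2 ≤ i) (hij : i < j) (hjl : j ≤ ℓ)
    {u v : V} (hu : u ∈ FattM A ℓ p i) (hv : v ∈ Fatt A ℓ p j) : ¬ A u v := by
  intro harc
  obtain ⟨hl, hinj, hparc⟩ := hp
  obtain ⟨⟨huN, huA, huF⟩, hupi⟩ := hu
  obtain ⟨hvN, hvA, hvF⟩ := hv
  have e1 : A (p (i - 1)) (p i) := by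
    have h := hparc (i - 1) (by omega) (by omega)
    rwa [show i - 1 + 1 = i by omega] at h
  apply hfree
  refine copy_P4_aux hA ?_ ?_ ?_ ?_ ?_ ?_ e1 hupi harc ?_ ?_ ?_
  · intro h
    have := hinj (Set.mem_Icc.2 ⟨by omega, by omega⟩) (Set.mem_Icc.2 ⟨by omega, by omega⟩) h
    omega
  · exact (notin_path_aux huN (by omega) (by omega)).symm
  · exact (notin_path_aux hvN (by omega) (by omega)).symm
  · exact (notin_path_aux huN (by omega) (by omega)).symm
  · exact (notin_path_aux hvN (by omega) (by omega)).symm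
  · intro h
    exact not_self_aux hA v (h ▸ harc)
  · exact fun h => huF (i - 1) (by omega) (by omega) (Or.symm h)
  · exact fun h => hvF (i - 1) (by omega) (by omega) (Or.symm h)
  · exact fun h => hvF i (by omega) hij (Or.symm h)

lemma no_arc_L_P4 (hA : Oriented A) (hp : IsDirPath A ℓ p) (hfree : Free A P4vec)
    {k j : ℕ} (hkj : k < j) (hjl : j + 1 ≤ ℓ)
    {u v : V} (hu : u ∈ Latt A ℓ p k) (hv : v ∈ LattP A ℓ p j) : ¬ A u v := by
  intro harc
  obtain ⟨hl, hinj, hparc⟩ := hp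
  obtain ⟨huN, huA, huL⟩ := hu
  obtain ⟨⟨hvN, hvA, hvL⟩, hvpj⟩ := hv
  have e3 : A (p j) (p (j + 1)) := hparc j (by omega) (by omega)
  apply hfree
  refine copy_P4_aux hA ?_ ?_ ?_ ?_ ?_ ?_ harc hvpj e3 ?_ ?_ ?_
  · intro h
    exact not_self_aux hA v (h ▸ harc)
  · exact notin_path_aux huN (by omega) (by omega)
  · exact notin_path_aux huN (by omega) (by omega)
  · exact notin_path_aux hvN (by omega) (by omega)
  · exact notin_path_aux hvN (by omega) (by omega)
  · intro h
    have := hinj (Set.mem_Icc.2 ⟨by omega, by omega⟩) (Set.mem_Icc.2 ⟨by omega, by omega⟩) h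
    omega
  · exact huL j hkj (by omega)
  · exact huL (j + 1) (by omega) (by omega)
  · exact hvL (j + 1) (by omega) (by omega)

lemma no_arc_F_A4 (hA : Oriented A) (hp : IsDirPath A ℓ p) (hfree : Free A A4vec)
    {i j : ℕ} (h2i : 2 ≤ i) (hij : i < j) (hjl : j ≤ ℓ)
    {u v : V} (hu : u ∈ FattP A ℓ p i) (hv : v ∈ Fatt A ℓ p j) : ¬ A u v := by
  intro harc
  obtain ⟨hl, hinj, hparc⟩ := hp
  obtain ⟨⟨huN, huA, huF⟩, hupi⟩ := hu
  obtain ⟨hvN, hvA, hvF⟩ := hv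
  have e3 : A (p (i - 1)) (p i) := by
    have h := hparc (i - 1) (by omega) (by omega)
    rwa [show i - 1 + 1 = i by omega] at h
  apply hfree
  -- f0 = v, f1 = u, f2 = p i, f3 = p (i-1)
  refine copy_A4_aux hA ?_ ?_ ?_ ?_ ?_ ?_ harc hupi e3 ?_ ?_ ?_
  · intro h
    exact not_self_aux hA v (h ▸ harc)
  · exact notin_path_aux hvN (by omega) (by omega)
  · exact notin_path_aux hvN (by omega) (by omega)
  · exact notin_path_aux huN (by omega) (by omega)
  · exact notin_path_aux huN (by omega) (by omega)
  · intro h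
    have := hinj (Set.mem_Icc.2 ⟨by omega, by omega⟩) (Set.mem_Icc.2 ⟨by omega, by omega⟩) h
    omega
  · exact hvF i (by omega) hij
  · exact hvF (i - 1) (by omega) (by omega)
  · exact huF (i - 1) (by omega) (by omega)

lemma no_arc_L_A4 (hA : Oriented A) (hp : IsDirPath A ℓ p) (hfree : Free A A4vec)
    {k j : ℕ} (hkj : k < j) (hjl : j + 1 ≤ ℓ)
    {u v : V} (hu : u ∈ Latt A ℓ p k) (hv : v ∈ LattM A ℓ p j) : ¬ A u v := by
  intro harc
  obtain ⟨hl, hinj, hparc⟩ := hp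
  obtain ⟨huN, huA, huL⟩ := hu
  obtain ⟨⟨hvN, hvA, hvL⟩, hvpj⟩ := hv
  have e1 : A (p j) (p (j + 1)) := hparc j (by omega) (by omega)
  apply hfree
  -- f0 = p (j+1), f1 = p j, f2 = v, f3 = u
  refine copy_A4_aux hA ?_ ?_ ?_ ?_ ?_ ?_ e1 hvpj harc ?_ ?_ ?_
  · intro h
    have := hinj (Set.mem_Icc.2 ⟨by omega, by omega⟩) (Set.mem_Icc.2 ⟨by omega, by omega⟩) h
    omega
  · exact (notin_path_aux hvN (by omega) (by omega)).symm
  · exact (notin_path_aux huN (by omega) (by omega)).symm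
  · exact (notin_path_aux hvN (by omega) (by omega)).symm
  · exact (notin_path_aux huN (by omega) (by omega)).symm
  · intro h
    exact not_self_aux hA v (h.symm ▸ harc)
  · exact fun h => hvL (j + 1) (by omega) (by omega) (Or.symm h)
  · exact fun h => huL (j + 1) (by omega) (by omega) (Or.symm h)
  · exact fun h => huL j hkj (by omega) (Or.symm h)

end Statement13Aux

/-- for a forward-induced directed path with `χ⃗(N(v)) ≤ γ` on its
vertices: if `D` is `P⃗4`-free then `χ⃗(W^p) ≤ 2γ`, and if `D` is `A⃗4`-free then
`χ⃗(W^a) ≤ 2γ`. -/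
theorem dichi_Wp_Wa {V : Type*} [Fintype V]
    (A : V → V → Prop) (hA : Oriented A)
    (ℓ : ℕ) (p : ℕ → V) (hp : IsDirPath A ℓ p) (hfi : ForwardInduced A ℓ p)
    (γ : ℕ) (hγ : ∀ i, 1 ≤ i → i ≤ ℓ → dichi A (nbr A (p i)) ≤ γ) :
    (Free A P4vec → dichi A (Wp A ℓ p) ≤ 2 * γ) ∧
      (Free A A4vec → dichi A (Wa A ℓ p) ≤ 2 * γ) := by
  have hl := hp.1
  have hcolN : ∀ i ∈ Set.Icc 2 (ℓ - 1), DicolorableOn A (nbr A (p i)) γ := by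
    intro i hi
    rw [Set.mem_Icc] at hi
    exact dichi_dicolorable_aux hA _ (hγ i (by omega) (by omega))
  constructor
  · intro hfree
    have hF : DicolorableOn A (⋃ i ∈ Set.Icc 2 (ℓ - 1), FattM A ℓ p i) γ := by
      refine block_dicolorable_aux A γ 2 (ℓ - 1) _ p ?_ ?_ hcolN
      · intro i hi v hv
        exact Or.symm hv.1.2.1
      · intro i hi j hj hij u hu v hv
        rw [Set.mem_Icc] at hi hj
        exact no_arc_F_P4 hA hp hfree (by omega) hij (by omega) hu hv.1
    have hL : DicolorableOn A (⋃ i ∈ Set.Icc 2 (ℓ - 1), LattP A ℓ p i) γ := by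
      refine block_dicolorable_aux A γ 2 (ℓ - 1) _ p ?_ ?_ hcolN
      · intro i hi v hv
        exact Or.symm hv.1.2.1
      · intro i hi j hj hij u hu v hv
        rw [Set.mem_Icc] at hi hj
        exact no_arc_L_P4 hA hp hfree hij (by omega) hu.1 hv
    exact Nat.sInf_le (dicolorable_union_aux hF hL)
  · intro hfree
    have hF : DicolorableOn A (⋃ i ∈ Set.Icc 2 (ℓ - 1), FattP A ℓ p i) γ := by
      refine block_dicolorable_aux A γ 2 (ℓ - 1) _ p ?_ ?_ hcolN
      · intro i hi v hv
        exact Or.symm hv.1.2.1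
      · intro i hi j hj hij u hu v hv
        rw [Set.mem_Icc] at hi hj
        exact no_arc_F_A4 hA hp hfree (by omega) hij (by omega) hu hv.1
    have hL : DicolorableOn A (⋃ i ∈ Set.Icc 2 (ℓ - 1), LattM A ℓ p i) γ := by
      refine block_dicolorable_aux A γ 2 (ℓ - 1) _ p ?_ ?_ hcolN
      · intro i hi v hv
        exact Or.symm hv.1.2.1
      · intro i hi j hj hij u hu v hv
        rw [Set.mem_Icc] at hi hj
        exact no_arc_L_A4 hA hp hfree hij (by omega) hu.1 hv
    exact Nat.sInf_le (dicolorable_union_aux hF hL)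

end DichiP4
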